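/- Let k ≥ 1, m = 2k, and let v ∈ R_m^{+}(K̂) = P_m + span{x^m y, x y^m} vanish at every point of the boundary of the square [−1,1]². Then the coefficients of the monomials x^m y and x y^m in v are zero, and there exists a polynomial q of total degree ≤ 2k−4 such that v(x,y) = (1−x²)(1−y²) q(x,y); in particular v = 0 when k = 1. -/
import Mathlib

noncomputable section
namespace Stmt11Aux

lemma eval_aeval (f : Fin 2 → Polynomial ℝ) (v : MvPolynomial (Fin 2) ℝ) (t : ℝ) :
    Polynomial.eval t (MvPolynomial.aeval f v) =
      MvPolynomial.eval (fun i => Polynomial.eval t (f i)) v := by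
  induction v using MvPolynomial.induction_on with
  | C a => simp
  | add p q hp hq => simp [hp, hq]
  | mul_X p i hp => simp [hp]

lemma sum_support (s : Fin 2 →₀ ℕ) : ∑ i ∈ s.support, s i = s 0 + s 1 := by
  rw [show (∑ i ∈ s.support, s i) = s.sum fun _ e => e from rfl,
    Finsupp.sum_fintype _ _ (fun _ => rfl), Fin.sum_univ_two]

lemma sum_eq (s : Fin 2 →₀ ℕ) : (s.sum fun _ e => e) = s 0 + s 1 := by
  rw [Finsupp.sum_fintype _ _ (fun _ => rfl), Fin.sum_univ_two]

lemma coeff_aeval_monomial_y (a : ℝ) (d : Fin 2 →₀ ℕ) (c : ℝ) (n : ℕ) :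
    (MvPolynomial.aeval ![Polynomial.X, Polynomial.C a]
        (MvPolynomial.monomial d c)).coeff n
      = if d 0 = n then c * a ^ (d 1) else 0 := by
  rw [MvPolynomial.aeval_monomial]
  have h : (d.prod fun i k => (![Polynomial.X, Polynomial.C a] i) ^ k)
      = Polynomial.X ^ (d 0) * Polynomial.C (a ^ (d 1)) := by
    rw [Finsupp.prod_fintype _ _ (fun _ => pow_zero _), Fin.prod_univ_two]
    simp only [Matrix.cons_val_zero, Matrix.cons_val_one, Matrix.head_cons, ← Polynomial.C_pow]
  rw [h]
  simp only [Polynomial.algebraMap_eq, mul_left_comm, Polynomial.coeff_C_mul,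
    mul_comm (Polynomial.X ^ (d 0)) _, Polynomial.coeff_C_mul, Polynomial.coeff_X_pow]
  split_ifs with h1 h2 h2 <;>
    first | ring1 | exact (h2 h1.symm).elim | exact (h1 h2.symm).elim

lemma coeff_aeval_monomial_x (a : ℝ) (d : Fin 2 →₀ ℕ) (c : ℝ) (n : ℕ) :
    (MvPolynomial.aeval ![Polynomial.C a, Polynomial.X]
        (MvPolynomial.monomial d c)).coeff n
      = if d 1 = n then c * a ^ (d 0) else 0 := by
  rw [MvPolynomial.aeval_monomial]
  have h : (d.prod fun i k => (![Polynomial.C a, Polynomial.X] i) ^ k)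
      = Polynomial.C (a ^ (d 0)) * Polynomial.X ^ (d 1) := by
    rw [Finsupp.prod_fintype _ _ (fun _ => pow_zero _), Fin.prod_univ_two]
    simp only [Matrix.cons_val_zero, Matrix.cons_val_one, Matrix.head_cons, ← Polynomial.C_pow]
  rw [h]
  simp only [Polynomial.algebraMap_eq, mul_left_comm, Polynomial.coeff_C_mul,
    mul_comm (Polynomial.X ^ (d 1)) _, Polynomial.coeff_C_mul, Polynomial.coeff_X_pow]
  split_ifs with h1 h2 h2 <;>
    first | ring1 | exact (h2 h1.symm).elim | exact (h1 h2.symm).elim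



def psix : Polynomial (Polynomial ℝ) →+* MvPolynomial (Fin 2) ℝ :=
  Polynomial.eval₂RingHom
    (Polynomial.eval₂RingHom (MvPolynomial.C) (MvPolynomial.X 1)) (MvPolynomial.X 0)

lemma psix_aeval (v : MvPolynomial (Fin 2) ℝ) :
    psix (MvPolynomial.aeval ![Polynomial.X, Polynomial.C Polynomial.X] v) = v := by
  induction v using MvPolynomial.induction_on with
  | C a => simp [psix]
  | add p q hp hq => simp [hp, hq]
  | mul_X p i hp => fin_cases i <;> (rw [map_mul, map_mul, hp]; congr 1; simp [psix])

lemma evalC_phix (a : ℝ) (v : MvPolynomial (Fin 2) ℝ) :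
    Polynomial.eval (Polynomial.C a)
      (MvPolynomial.aeval ![Polynomial.X, Polynomial.C Polynomial.X] v) =
      MvPolynomial.aeval ![Polynomial.C a, Polynomial.X] v := by
  induction v using MvPolynomial.induction_on with
  | C a => simp
  | add p q hp hq => simp [hp, hq]
  | mul_X p i hp => fin_cases i <;> simp [hp]

lemma isCoprime_pm : IsCoprime (Polynomial.X - Polynomial.C (1 : Polynomial ℝ))
    (Polynomial.X - Polynomial.C (-1 : Polynomial ℝ)) := by
  apply Polynomial.isCoprime_X_sub_C_of_isUnit_sub
  have : (1 : Polynomial ℝ) - (-1) = Polynomial.C 2 := by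
    rw [map_ofNat]; ring
  rw [this, Polynomial.isUnit_C]
  norm_num

lemma sub_x (w : MvPolynomial (Fin 2) ℝ)
    (h1 : MvPolynomial.aeval ![Polynomial.C (1 : ℝ), Polynomial.X] w = 0)
    (h2 : MvPolynomial.aeval ![Polynomial.C (-1 : ℝ), Polynomial.X] w = 0) :
    ∃ u, w = (MvPolynomial.X 0 ^ 2 - 1) * u := by
  set F := MvPolynomial.aeval (![Polynomial.X, Polynomial.C Polynomial.X] : Fin 2 → Polynomial (Polynomial ℝ)) w with hF
  have d1 : Polynomial.X - Polynomial.C (1 : Polynomial ℝ) ∣ F := by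
    rw [Polynomial.dvd_iff_isRoot, Polynomial.IsRoot, ← Polynomial.C_1, hF, evalC_phix,
      Polynomial.C_1]
    exact h1
  have d2 : Polynomial.X - Polynomial.C (-1 : Polynomial ℝ) ∣ F := by
    rw [Polynomial.dvd_iff_isRoot, Polynomial.IsRoot,
      show ((-1 : Polynomial ℝ)) = Polynomial.C (-1) by simp, hF, evalC_phix]
    exact h2
  obtain ⟨G, hG⟩ := isCoprime_pm.mul_dvd d1 d2
  refine ⟨psix G, ?_⟩
  have := psix_aeval w
  rw [← hF] at this
  rw [← this, hG, map_mul, map_mul, map_sub, map_sub]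
  have e1 : psix Polynomial.X = MvPolynomial.X 0 := by simp [psix]
  have e2 : psix (Polynomial.C (1 : Polynomial ℝ)) = 1 := by simp [psix]
  have e3 : psix (Polynomial.C (-1 : Polynomial ℝ)) = -1 := by simp [psix]
  rw [e1, e2, e3]
  ring

def psiy : Polynomial (Polynomial ℝ) →+* MvPolynomial (Fin 2) ℝ :=
  Polynomial.eval₂RingHom
    (Polynomial.eval₂RingHom (MvPolynomial.C) (MvPolynomial.X 0)) (MvPolynomial.X 1)

lemma psiy_aeval (v : MvPolynomial (Fin 2) ℝ) :
    psiy (MvPolynomial.aeval ![Polynomial.C Polynomial.X, Polynomial.X] v) = v := by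
  induction v using MvPolynomial.induction_on with
  | C a => simp [psiy]
  | add p q hp hq => simp [hp, hq]
  | mul_X p i hp => fin_cases i <;> (rw [map_mul, map_mul, hp]; congr 1; simp [psiy])

lemma evalC_phiy (a : ℝ) (v : MvPolynomial (Fin 2) ℝ) :
    Polynomial.eval (Polynomial.C a)
      (MvPolynomial.aeval ![Polynomial.C Polynomial.X, Polynomial.X] v) =
      MvPolynomial.aeval ![Polynomial.X, Polynomial.C a] v := by
  induction v using MvPolynomial.induction_on with
  | C a => simp
  | add p q hp hq => simp [hp, hq]
  | mul_X p i hp => fin_cases i <;> simp [hp]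

lemma sub_y (w : MvPolynomial (Fin 2) ℝ)
    (h1 : MvPolynomial.aeval ![Polynomial.X, Polynomial.C (1 : ℝ)] w = 0)
    (h2 : MvPolynomial.aeval ![Polynomial.X, Polynomial.C (-1 : ℝ)] w = 0) :
    ∃ u, w = (MvPolynomial.X 1 ^ 2 - 1) * u := by
  set F := MvPolynomial.aeval (![Polynomial.C Polynomial.X, Polynomial.X] : Fin 2 → Polynomial (Polynomial ℝ)) w with hF
  have d1 : Polynomial.X - Polynomial.C (1 : Polynomial ℝ) ∣ F := by
    rw [Polynomial.dvd_iff_isRoot, Polynomial.IsRoot, ← Polynomial.C_1, hF, evalC_phiy,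
      Polynomial.C_1]
    exact h1
  have d2 : Polynomial.X - Polynomial.C (-1 : Polynomial ℝ) ∣ F := by
    rw [Polynomial.dvd_iff_isRoot, Polynomial.IsRoot,
      show ((-1 : Polynomial ℝ)) = Polynomial.C (-1) by simp, hF, evalC_phiy]
    exact h2
  obtain ⟨G, hG⟩ := isCoprime_pm.mul_dvd d1 d2
  refine ⟨psiy G, ?_⟩
  have := psiy_aeval w
  rw [← hF] at this
  rw [← this, hG, map_mul, map_mul, map_sub, map_sub]
  have e1 : psiy Polynomial.X = MvPolynomial.X 1 := by simp [psiy]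
  have e2 : psiy (Polynomial.C (1 : Polynomial ℝ)) = 1 := by simp [psiy]
  have e3 : psiy (Polynomial.C (-1 : Polynomial ℝ)) = -1 := by simp [psiy]
  rw [e1, e2, e3]
  ring

end Stmt11Aux

end

theorem stmt_11 (k : ℕ) (hk : 1 ≤ k)
    -- v ∈ R_m⁺(K̂), m = 2k, with its decomposition v = p + c₁ xᵐy + c₂ xyᵐ
    (v p : MvPolynomial (Fin 2) ℝ) (c₁ c₂ : ℝ)
    (hp : p.totalDegree ≤ 2 * k)
    (hv : v = p + MvPolynomial.C c₁ * (MvPolynomial.X 0 ^ (2 * k) * MvPolynomial.X 1) +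
      MvPolynomial.C c₂ * (MvPolynomial.X 0 * MvPolynomial.X 1 ^ (2 * k)))
    -- v vanishes on the boundary of [−1,1]²
    (hbd : ∀ x y : ℝ, x ∈ Set.Icc (-1 : ℝ) 1 → y ∈ Set.Icc (-1 : ℝ) 1 →
      (x = 1 ∨ x = -1 ∨ y = 1 ∨ y = -1) → MvPolynomial.eval ![x, y] v = 0) :
    c₁ = 0 ∧ c₂ = 0 ∧
    (∃ q : MvPolynomial (Fin 2) ℝ,
      (∀ d ∈ q.support, ((d 0 + d 1 : ℕ) : ℤ) ≤ 2 * (k : ℤ) - 4) ∧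
      v = (1 - MvPolynomial.X 0 ^ 2) * (1 - MvPolynomial.X 1 ^ 2) * q) ∧
    (k = 1 → v = 0) := by
  have hinf : (Set.Icc (-1:ℝ) 1).Infinite := Set.Icc_infinite (by norm_num)
  have hgv : ∀ a : ℝ, a = 1 ∨ a = -1 →
      MvPolynomial.aeval ![Polynomial.X, Polynomial.C a] v = 0 := by
    intro a ha
    have hamem : a ∈ Set.Icc (-1:ℝ) 1 := by rcases ha with h | h <;> rw [h] <;> norm_num
    apply Polynomial.eq_zero_of_infinite_isRoot
    apply hinf.mono
    intro t ht
    show Polynomial.IsRoot _ t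
    rw [Polynomial.IsRoot, Stmt11Aux.eval_aeval]
    have he : (fun i => Polynomial.eval t (![Polynomial.X, Polynomial.C a] i)) = ![t, a] := by
      funext i; fin_cases i <;> simp
    rw [he]
    exact hbd t a ht hamem (Or.inr (Or.inr ha))
  have hfv : ∀ a : ℝ, a = 1 ∨ a = -1 →
      MvPolynomial.aeval ![Polynomial.C a, Polynomial.X] v = 0 := by
    intro a ha
    have hamem : a ∈ Set.Icc (-1:ℝ) 1 := by rcases ha with h | h <;> rw [h] <;> norm_num
    apply Polynomial.eq_zero_of_infinite_isRoot
    apply hinf.mono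
    intro t ht
    show Polynomial.IsRoot _ t
    rw [Polynomial.IsRoot, Stmt11Aux.eval_aeval]
    have he : (fun i => Polynomial.eval t (![Polynomial.C a, Polynomial.X] i)) = ![a, t] := by
      funext i; fin_cases i <;> simp
    rw [he]
    rcases ha with h | h
    · exact hbd a t hamem ht (Or.inl h)
    · exact hbd a t hamem ht (Or.inr (Or.inl h))
  -- coefficient of X^(2k) after substituting y = a
  have hcoy : ∀ a : ℝ, (MvPolynomial.aeval ![Polynomial.X, Polynomial.C a] v).coeff (2*k)
      = (MvPolynomial.aeval ![Polynomial.X, Polynomial.C a] p).coeff (2*k) + c₁ * a := by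
    intro a
    have h1 : (MvPolynomial.aeval ![Polynomial.X, Polynomial.C a]
        (MvPolynomial.C c₁ * (MvPolynomial.X 0 ^ (2*k) * MvPolynomial.X 1))).coeff (2*k)
        = c₁ * a := by
      simp only [map_mul, map_pow, MvPolynomial.aeval_X, MvPolynomial.aeval_C,
        Matrix.cons_val_zero, Matrix.cons_val_one, Matrix.head_cons, Polynomial.algebraMap_eq]
      rw [show Polynomial.C c₁ * (Polynomial.X ^ (2*k) * Polynomial.C a)
          = Polynomial.C (c₁ * a) * Polynomial.X ^ (2*k) by
        rw [map_mul]; ring]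
      rw [Polynomial.coeff_C_mul, Polynomial.coeff_X_pow, if_pos rfl, mul_one]
    have h2 : (MvPolynomial.aeval ![Polynomial.X, Polynomial.C a]
        (MvPolynomial.C c₂ * (MvPolynomial.X 0 * MvPolynomial.X 1 ^ (2*k)))).coeff (2*k)
        = 0 := by
      simp only [map_mul, map_pow, MvPolynomial.aeval_X, MvPolynomial.aeval_C,
        Matrix.cons_val_zero, Matrix.cons_val_one, Matrix.head_cons, Polynomial.algebraMap_eq]
      rw [show Polynomial.C c₂ * (Polynomial.X * Polynomial.C a ^ (2*k))
          = Polynomial.C (c₂ * a ^ (2*k)) * Polynomial.X ^ 1 by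
        rw [map_mul, map_pow]; ring]
      rw [Polynomial.coeff_C_mul, Polynomial.coeff_X_pow, if_neg (by omega), mul_zero]
    rw [hv, map_add, map_add, Polynomial.coeff_add, Polynomial.coeff_add, h1, h2, add_zero]
  have hcox : ∀ a : ℝ, (MvPolynomial.aeval ![Polynomial.C a, Polynomial.X] v).coeff (2*k)
      = (MvPolynomial.aeval ![Polynomial.C a, Polynomial.X] p).coeff (2*k) + c₂ * a := by
    intro a
    have h1 : (MvPolynomial.aeval ![Polynomial.C a, Polynomial.X]
        (MvPolynomial.C c₁ * (MvPolynomial.X 0 ^ (2*k) * MvPolynomial.X 1))).coeff (2*k)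
        = 0 := by
      simp only [map_mul, map_pow, MvPolynomial.aeval_X, MvPolynomial.aeval_C,
        Matrix.cons_val_zero, Matrix.cons_val_one, Matrix.head_cons, Polynomial.algebraMap_eq]
      rw [show Polynomial.C c₁ * (Polynomial.C a ^ (2*k) * Polynomial.X)
          = Polynomial.C (c₁ * a ^ (2*k)) * Polynomial.X ^ 1 by
        rw [map_mul, map_pow]; ring]
      rw [Polynomial.coeff_C_mul, Polynomial.coeff_X_pow, if_neg (by omega), mul_zero]
    have h2 : (MvPolynomial.aeval ![Polynomial.C a, Polynomial.X]
        (MvPolynomial.C c₂ * (MvPolynomial.X 0 * MvPolynomial.X 1 ^ (2*k)))).coeff (2*k)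
        = c₂ * a := by
      simp only [map_mul, map_pow, MvPolynomial.aeval_X, MvPolynomial.aeval_C,
        Matrix.cons_val_zero, Matrix.cons_val_one, Matrix.head_cons, Polynomial.algebraMap_eq]
      rw [show Polynomial.C c₂ * (Polynomial.C a * Polynomial.X ^ (2*k))
          = Polynomial.C (c₂ * a) * Polynomial.X ^ (2*k) by
        rw [map_mul]; ring]
      rw [Polynomial.coeff_C_mul, Polynomial.coeff_X_pow, if_pos rfl, mul_one]
    rw [hv, map_add, map_add, Polynomial.coeff_add, Polynomial.coeff_add, h1, h2, add_zero]
  -- the p-contributions at a = 1 and a = -1 agree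
  have hpcy : (MvPolynomial.aeval ![Polynomial.X, Polynomial.C (1:ℝ)] p).coeff (2*k)
      = (MvPolynomial.aeval ![Polynomial.X, Polynomial.C (-1:ℝ)] p).coeff (2*k) := by
    conv_lhs => rw [MvPolynomial.as_sum p]
    conv_rhs => rw [MvPolynomial.as_sum p]
    rw [map_sum, map_sum, Polynomial.finset_sum_coeff, Polynomial.finset_sum_coeff]
    apply Finset.sum_congr rfl
    intro d hd
    rw [Stmt11Aux.coeff_aeval_monomial_y, Stmt11Aux.coeff_aeval_monomial_y]
    by_cases h0 : d 0 = 2*k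
    · have hle := MvPolynomial.le_totalDegree hd
      rw [Stmt11Aux.sum_eq] at hle
      have h1 : d 1 = 0 := by omega
      rw [h1]
      norm_num
    · rw [if_neg h0, if_neg h0]
  have hpcx : (MvPolynomial.aeval ![Polynomial.C (1:ℝ), Polynomial.X] p).coeff (2*k)
      = (MvPolynomial.aeval ![Polynomial.C (-1:ℝ), Polynomial.X] p).coeff (2*k) := by
    conv_lhs => rw [MvPolynomial.as_sum p]
    conv_rhs => rw [MvPolynomial.as_sum p]
    rw [map_sum, map_sum, Polynomial.finset_sum_coeff, Polynomial.finset_sum_coeff]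
    apply Finset.sum_congr rfl
    intro d hd
    rw [Stmt11Aux.coeff_aeval_monomial_x, Stmt11Aux.coeff_aeval_monomial_x]
    by_cases h0 : d 1 = 2*k
    · have hle := MvPolynomial.le_totalDegree hd
      rw [Stmt11Aux.sum_eq] at hle
      have h1 : d 0 = 0 := by omega
      rw [h1]
      norm_num
    · rw [if_neg h0, if_neg h0]
  have c1z : c₁ = 0 := by
    have t1 := hcoy 1
    have t2 := hcoy (-1)
    rw [hgv 1 (Or.inl rfl), Polynomial.coeff_zero] at t1
    rw [hgv (-1) (Or.inr rfl), Polynomial.coeff_zero] at t2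
    rw [hpcy] at t1
    linarith
  have c2z : c₂ = 0 := by
    have t1 := hcox 1
    have t2 := hcox (-1)
    rw [hfv 1 (Or.inl rfl), Polynomial.coeff_zero] at t1
    rw [hfv (-1) (Or.inr rfl), Polynomial.coeff_zero] at t2
    rw [hpcx] at t1
    linarith
  have hvp : v = p := by rw [hv, c1z, c2z]; simp
  have hdv : v.totalDegree ≤ 2*k := hvp ▸ hp
  obtain ⟨w, hw⟩ := Stmt11Aux.sub_x v (hfv 1 (Or.inl rfl)) (hfv (-1) (Or.inr rfl))
  have hX2ne : (Polynomial.X ^ 2 - 1 : Polynomial ℝ) ≠ 0 := by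
    intro hcon
    have := congrArg (fun q => Polynomial.coeff q 2) hcon
    simp [Polynomial.coeff_one] at this
  have hgw : ∀ a : ℝ, a = 1 ∨ a = -1 →
      MvPolynomial.aeval ![Polynomial.X, Polynomial.C a] w = 0 := by
    intro a ha
    have h0 := hgv a ha
    rw [hw, map_mul] at h0
    have hxx : MvPolynomial.aeval ![Polynomial.X, Polynomial.C a]
        ((MvPolynomial.X 0 : MvPolynomial (Fin 2) ℝ)^2 - 1) = Polynomial.X^2 - 1 := by
      simp
    rw [hxx] at h0
    exact (mul_eq_zero.mp h0).resolve_left hX2ne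
  obtain ⟨q, hq⟩ := Stmt11Aux.sub_y w (hgw 1 (Or.inl rfl)) (hgw (-1) (Or.inr rfl))
  have hvq : v = (MvPolynomial.X 0^2 - 1) * (MvPolynomial.X 1^2 - 1) * q := by
    rw [hw, hq]; ring
  have hkey : q ≠ 0 → q.totalDegree + 4 ≤ 2*k := by
    intro hq0
    obtain ⟨d, hd, hds⟩ := Finset.exists_mem_eq_sup q.support
      (MvPolynomial.support_nonempty.mpr hq0) (fun s => s.sum fun _ e => e)
    have hdeg : q.totalDegree = d 0 + d 1 := by
      rw [MvPolynomial.totalDegree, hds, Stmt11Aux.sum_eq]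
    set s0 : Fin 2 →₀ ℕ := Finsupp.single 0 2 with hs0
    set s1 : Fin 2 →₀ ℕ := Finsupp.single 1 2 with hs1
    have hBq : v = (MvPolynomial.monomial (s0 + s1) (1:ℝ)) * q
        - MvPolynomial.monomial s0 (1:ℝ) * q - MvPolynomial.monomial s1 (1:ℝ) * q + q := by
      rw [hvq]
      have h0 : (MvPolynomial.monomial (s0+s1) (1:ℝ))
          = MvPolynomial.X 0^2 * MvPolynomial.X 1^2 := by
        rw [hs0, hs1, MvPolynomial.X_pow_eq_monomial, MvPolynomial.X_pow_eq_monomial,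
          MvPolynomial.monomial_mul, one_mul]
      have h1 : (MvPolynomial.monomial s0 (1:ℝ)) = MvPolynomial.X 0^2 :=
        MvPolynomial.X_pow_eq_monomial.symm
      have h2 : (MvPolynomial.monomial s1 (1:ℝ)) = MvPolynomial.X 1^2 :=
        MvPolynomial.X_pow_eq_monomial.symm
      rw [h0, h1, h2]; ring
    have hz1 : MvPolynomial.coeff (s0 + s1 + d) (MvPolynomial.monomial s0 (1:ℝ) * q) = 0 := by
      rw [show s0 + s1 + d = s0 + (s1 + d) from add_assoc _ _ _,
        MvPolynomial.coeff_monomial_mul, one_mul]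
      apply MvPolynomial.coeff_eq_zero_of_totalDegree_lt
      rw [Stmt11Aux.sum_support]
      have e0 : (s1 + d) 0 = d 0 := by simp [hs1, Finsupp.single_apply]
      have e1 : (s1 + d) 1 = d 1 + 2 := by
        simp [hs1, Finsupp.single_apply, add_comm]
      rw [e0, e1, hdeg]; omega
    have hz2 : MvPolynomial.coeff (s0 + s1 + d) (MvPolynomial.monomial s1 (1:ℝ) * q) = 0 := by
      rw [show s0 + s1 + d = s1 + (s0 + d) by rw [add_comm s0 s1, add_assoc],
        MvPolynomial.coeff_monomial_mul, one_mul]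
      apply MvPolynomial.coeff_eq_zero_of_totalDegree_lt
      rw [Stmt11Aux.sum_support]
      have e0 : (s0 + d) 0 = d 0 + 2 := by
        simp [hs0, Finsupp.single_apply, add_comm]
      have e1 : (s0 + d) 1 = d 1 := by simp [hs0, Finsupp.single_apply]
      rw [e0, e1, hdeg]; omega
    have hz3 : MvPolynomial.coeff (s0 + s1 + d) q = 0 := by
      apply MvPolynomial.coeff_eq_zero_of_totalDegree_lt
      rw [Stmt11Aux.sum_support]
      have e0 : (s0 + s1 + d) 0 = d 0 + 2 := by
        simp [hs0, hs1, Finsupp.single_apply, add_comm]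
      have e1 : (s0 + s1 + d) 1 = d 1 + 2 := by
        simp [hs0, hs1, Finsupp.single_apply, add_comm]
      rw [e0, e1, hdeg]; omega
    have hc : MvPolynomial.coeff (s0 + s1 + d) v = MvPolynomial.coeff d q := by
      rw [hBq, MvPolynomial.coeff_add, MvPolynomial.coeff_sub, MvPolynomial.coeff_sub,
        MvPolynomial.coeff_monomial_mul, one_mul, hz1, hz2, hz3]
      ring
    have hmem : (s0 + s1 + d) ∈ v.support :=
      MvPolynomial.mem_support_iff.mpr (hc ▸ MvPolynomial.mem_support_iff.mp hd)
    have hle := MvPolynomial.le_totalDegree hmem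
    rw [Stmt11Aux.sum_eq] at hle
    have e0 : (s0 + s1 + d) 0 = d 0 + 2 := by
      simp [hs0, hs1, Finsupp.single_apply, add_comm]
    have e1 : (s0 + s1 + d) 1 = d 1 + 2 := by
      simp [hs0, hs1, Finsupp.single_apply, add_comm]
    rw [e0, e1] at hle
    rw [hdeg]
    omega
  refine ⟨c1z, c2z, ⟨q, ?_, by rw [hvq]; ring⟩, ?_⟩
  · intro d' hd'
    have hq0 : q ≠ 0 := by
      intro h
      rw [h] at hd'
      simp at hd'
    have hb := hkey hq0
    have hle := MvPolynomial.le_totalDegree hd'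
    rw [Stmt11Aux.sum_eq] at hle
    have : d' 0 + d' 1 + 4 ≤ 2*k := by omega
    push_cast
    omega
  · intro hk1
    rcases eq_or_ne q 0 with h | h
    · rw [hvq, h]; ring
    · exact absurd (hkey h) (by omega)
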